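/- For every z ∈ ℝ³, the iterated Lie bracket of g_V with [g_P, g_V] satisfies [g_V, [g_P, g_V]](z) = −[g_P, g_V](z). -/

import Mathlib

noncomputable section

/-- Drift vector field of the Mayer-form SIRI dynamics, `z = (x_C, x_S, x_R)`. -/
def fVec (cP cI γ : ℝ) (z : ℝ × ℝ × ℝ) : ℝ × ℝ × ℝ :=
  (cP * (z.2.1 + z.2.2) + cI * (1 - z.2.1 - z.2.2), 0, γ * (1 - z.2.1 - z.2.2))

/-- Control vector field for the protection input. -/
def gPVec (β βh cP : ℝ) (z : ℝ × ℝ × ℝ) : ℝ × ℝ × ℝ :=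
  (-(cP * (z.2.1 + z.2.2)), -(β * z.2.1 * (1 - z.2.1 - z.2.2)),
    -(βh * z.2.2 * (1 - z.2.1 - z.2.2)))

/-- Control vector field for the vaccination input. -/
def gVVec (cV : ℝ) (z : ℝ × ℝ × ℝ) : ℝ × ℝ × ℝ := (cV * z.2.1, -z.2.1, z.2.1)

/-- Lie bracket of two vector fields on `ℝ³`:
`[X, Y](z) = DY(z) X(z) − DX(z) Y(z)`, where `D` is the Fréchet derivative. -/
def lieBr (X Y : ℝ × ℝ × ℝ → ℝ × ℝ × ℝ) (z : ℝ × ℝ × ℝ) : ℝ × ℝ × ℝ :=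
  fderiv ℝ Y z (X z) - fderiv ℝ X z (Y z)

/-- Projection onto the second coordinate. -/
def pr2 : ℝ × ℝ × ℝ →L[ℝ] ℝ :=
  (ContinuousLinearMap.fst ℝ ℝ ℝ).comp (ContinuousLinearMap.snd ℝ ℝ (ℝ × ℝ))

/-- Projection onto the third coordinate. -/
def pr3 : ℝ × ℝ × ℝ →L[ℝ] ℝ :=
  (ContinuousLinearMap.snd ℝ ℝ ℝ).comp (ContinuousLinearMap.snd ℝ ℝ (ℝ × ℝ))

lemma h2 (z : ℝ × ℝ × ℝ) : HasFDerivAt (fun z : ℝ × ℝ × ℝ => z.2.1) pr2 z :=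
  pr2.hasFDerivAt

lemma h3 (z : ℝ × ℝ × ℝ) : HasFDerivAt (fun z : ℝ × ℝ × ℝ => z.2.2) pr3 z :=
  pr3.hasFDerivAt

lemma hV (cV : ℝ) (z : ℝ × ℝ × ℝ) :
    HasFDerivAt (gVVec cV) ((cV • pr2).prod ((-pr2).prod pr2)) z :=
  HasFDerivAt.prodMk ((h2 z).const_mul cV) (HasFDerivAt.prodMk ((h2 z).neg) (h2 z))

lemma hS (z : ℝ × ℝ × ℝ) :
    HasFDerivAt (fun z : ℝ × ℝ × ℝ => 1 - z.2.1 - z.2.2) (0 - pr2 - pr3) z :=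
  ((hasFDerivAt_const (1:ℝ) z).sub (h2 z)).sub (h3 z)

lemma brPV (β βh cP cV : ℝ) :
    lieBr (gPVec β βh cP) (gVVec cV) = fun z : ℝ × ℝ × ℝ =>
      (-(β * cV * (z.2.1 * (1 - z.2.1 - z.2.2))), 0,
        -((β - βh) * (z.2.1 * (1 - z.2.1 - z.2.2)))) := by
  funext z
  have hP : HasFDerivAt (gPVec β βh cP)
      ((-(cP • (pr2 + pr3))).prod
        ((-((fun w : ℝ × ℝ × ℝ => β * w.2.1) z • (0 - pr2 - pr3) +
            (fun w : ℝ × ℝ × ℝ => 1 - w.2.1 - w.2.2) z • (β • pr2))).prod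
          (-((fun w : ℝ × ℝ × ℝ => βh * w.2.2) z • (0 - pr2 - pr3) +
            (fun w : ℝ × ℝ × ℝ => 1 - w.2.1 - w.2.2) z • (βh • pr3))))) z :=
    HasFDerivAt.prodMk ((((h2 z).add (h3 z)).const_mul cP).neg)
      (HasFDerivAt.prodMk ((HasFDerivAt.mul ((h2 z).const_mul β) (hS z)).neg)
        ((HasFDerivAt.mul ((h3 z).const_mul βh) (hS z)).neg))
  unfold lieBr
  rw [(hV cV z).fderiv, hP.fderiv]
  simp only [gPVec, gVVec, pr2, pr3, ContinuousLinearMap.prod_apply,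
    ContinuousLinearMap.smul_apply, ContinuousLinearMap.neg_apply,
    ContinuousLinearMap.add_apply, ContinuousLinearMap.sub_apply,
    ContinuousLinearMap.zero_apply, ContinuousLinearMap.comp_apply,
    ContinuousLinearMap.coe_fst', ContinuousLinearMap.coe_snd',
    smul_eq_mul, Prod.mk_sub_mk, Prod.mk.injEq]
  refine ⟨by ring, by ring, by ring⟩

/-- `[g_V, [g_P, g_V]](z) = −[g_P, g_V](z)`. -/
theorem siri_lie_gV_gPgV
    (β βh γ cP cV cI : ℝ)
    (hβ : 0 < β) (hβh : 0 < βh) (hγ : 0 < γ)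
    (hcP : 0 < cP) (hcV : 0 < cV) (hcI : 0 < cI) :
    ∀ z : ℝ × ℝ × ℝ,
      lieBr (gVVec cV) (lieBr (gPVec β βh cP) (gVVec cV)) z =
        -(lieBr (gPVec β βh cP) (gVVec cV) z) := by
  intro z
  rw [brPV]
  have hys : HasFDerivAt (fun w : ℝ × ℝ × ℝ => w.2.1 * (1 - w.2.1 - w.2.2))
      ((fun w : ℝ × ℝ × ℝ => w.2.1) z • (0 - pr2 - pr3) +
        (fun w : ℝ × ℝ × ℝ => 1 - w.2.1 - w.2.2) z • pr2) z := (h2 z).mul (hS z)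
  have hB : HasFDerivAt (fun z : ℝ × ℝ × ℝ =>
      ((-(β * cV * (z.2.1 * (1 - z.2.1 - z.2.2))), 0,
        -((β - βh) * (z.2.1 * (1 - z.2.1 - z.2.2)))) : ℝ × ℝ × ℝ))
      ((-((β * cV) • ((fun w : ℝ × ℝ × ℝ => w.2.1) z • (0 - pr2 - pr3) +
          (fun w : ℝ × ℝ × ℝ => 1 - w.2.1 - w.2.2) z • pr2))).prod
        ((0 : ℝ × ℝ × ℝ →L[ℝ] ℝ).prod
          (-((β - βh) • ((fun w : ℝ × ℝ × ℝ => w.2.1) z • (0 - pr2 - pr3) +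
            (fun w : ℝ × ℝ × ℝ => 1 - w.2.1 - w.2.2) z • pr2))))) z :=
    HasFDerivAt.prodMk ((hys.const_mul (β * cV)).neg)
      (HasFDerivAt.prodMk (hasFDerivAt_const (0:ℝ) z) ((hys.const_mul (β - βh)).neg))
  unfold lieBr
  rw [hB.fderiv, (hV cV z).fderiv]
  simp only [gVVec, pr2, pr3, ContinuousLinearMap.prod_apply,
    ContinuousLinearMap.smul_apply, ContinuousLinearMap.neg_apply,
    ContinuousLinearMap.add_apply, ContinuousLinearMap.sub_apply,
    ContinuousLinearMap.zero_apply, ContinuousLinearMap.comp_apply,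
    ContinuousLinearMap.coe_fst', ContinuousLinearMap.coe_snd',
    smul_eq_mul, Prod.mk_sub_mk, Prod.neg_mk, Prod.mk.injEq]
  refine ⟨by ring, by ring, by ring⟩
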